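/- For every α ∈ (0,1), every constant L > 0, every r ≥ 1, every n ≥ 2, every ε ∈ (0,1), every measurable estimator θ̂_r : ℕ^n → ℝ, and every measurable h : ℝ → ℝ, one has sup over P ∈ Σ(α,L) of P_P( ℓ(θ̂_r(X_n), θ_r(P;X_n)) ≥ ε ) = 1, where Σ(α,L) is the class of probability mass functions P on ℕ with lim_{x→0} x^α F̄_P(x) = L. In particular, the minimax risk over the regularly varying class Σ(α,L) equals the minimax risk over all discrete distributions. -/

import Mathlib

open MeasureTheory ProbabilityTheory Real Filter

noncomputable section

/-- The law of an i.i.d. sample of size `n` from the discrete distribution `P` on `ℕ`. -/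
def sampleMeasure (P : PMF ℕ) (n : ℕ) : Measure (Fin n → ℕ) :=
  Measure.pi fun _ => P.toMeasure

/-- The probability mass of symbol `j` under `P`, as a real number. -/
def pReal (P : PMF ℕ) (j : ℕ) : ℝ := (P j).toReal

/-- Empirical frequency of the symbol `j` in the sample `ω`. -/
def freq {n : ℕ} (ω : Fin n → ℕ) (j : ℕ) : ℕ :=
  (Finset.univ.filter fun i => ω i = j).card

/-- The `r`-order missing mass `θ_r(P; X_n)`. -/
def missingMass (p : ℕ → ℝ) (r : ℕ) {n : ℕ} (ω : Fin n → ℕ) : ℝ :=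
  ∑' j, p j ^ r * (if freq ω j = 0 then 1 else 0)

/-- `M_{n,r}`: the number of distinct symbols appearing exactly `r` times in the sample. -/
def Mcount {n : ℕ} (ω : Fin n → ℕ) (r : ℕ) : ℝ :=
  ∑' j, if freq ω j = r then 1 else 0

/-- The Good–Turing-type estimator `θ̂_r^{GT}(X_n) = M_{n,r} / (n choose r)`. -/
def gtEst {n : ℕ} (ω : Fin n → ℕ) (r : ℕ) : ℝ := Mcount ω r / (n.choose r)

/-- The multiplicative (relative) loss: `ℓ(t, θ) = |t/θ - 1|` if `θ > 0`, and `h t` otherwise. -/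
def mloss (h : ℝ → ℝ) (t θ : ℝ) : ℝ := if 0 < θ then |t / θ - 1| else h t

/-- The tail function `F̄_P(x) = #{j : p_j > x}`. -/
def tailF (P : PMF ℕ) (x : ℝ) : ℕ := Set.ncard {j | x < pReal P j}

namespace MMImp

/-- The tail shape: `g α L m j` is the mass of the `(j+1)`-st symbol. -/
def gfun (α L : ℝ) (m : ℕ) (j : ℕ) : ℝ :=
  L ^ α⁻¹ * ((j : ℝ) + 1 + m) ^ (-α⁻¹)

/-- Total tail mass. -/
def tau (α L : ℝ) (m : ℕ) : ℝ := ∑' j, gfun α L m j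

/-- The `r`-th moment sum of the tail. -/
def Tsum (α L : ℝ) (r m : ℕ) : ℝ := ∑' j, gfun α L m j ^ r

/-- The adversarial pmf (as a real function). -/
def pfun (α L : ℝ) (m : ℕ) : ℕ → ℝ := fun j =>
  if j = 0 then 1 - tau α L m else gfun α L m (j - 1)

section lemmas

variable {α L : ℝ}

lemma cpos (hL : 0 < L) : 0 < L ^ α⁻¹ := Real.rpow_pos_of_pos hL _

lemma gfun_pos (hL : 0 < L) (m j : ℕ) : 0 < gfun α L m j :=
  mul_pos (cpos hL) (Real.rpow_pos_of_pos (by positivity) _)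

set_option maxHeartbeats 1000000 in
lemma summable_shift (m : ℕ) {q : ℝ} (hq : q < -1) :
    Summable (fun j : ℕ => ((j : ℝ) + 1 + m) ^ q) := by
  have h1 : Summable (fun j : ℕ => ((j + (m + 1) : ℕ) : ℝ) ^ q) :=
    (summable_nat_add_iff (m + 1)).2 (Real.summable_nat_rpow.mpr hq)
  refine h1.congr fun j => ?_
  have hcast : ((j + (m + 1) : ℕ) : ℝ) = (j : ℝ) + 1 + m := by push_cast; ring
  rw [hcast]

lemma neg_inv_lt (h0 : 0 < α) (h1 : α < 1) : -α⁻¹ < -1 := by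
  have : 1 < α⁻¹ := (one_lt_inv₀ h0).2 h1
  linarith

lemma summable_gfun (h0 : 0 < α) (h1 : α < 1) (m : ℕ) : Summable (gfun α L m) :=
  (summable_shift m (neg_inv_lt h0 h1)).mul_left _

lemma gfun_pow_eq (m j : ℕ) (r : ℕ) :
    gfun α L m j ^ r = (L ^ α⁻¹) ^ r * ((j : ℝ) + 1 + m) ^ (-α⁻¹ * r) := by
  have hb : (0 : ℝ) ≤ (j : ℝ) + 1 + m := by positivity
  rw [gfun, mul_pow, ← Real.rpow_natCast (((j : ℝ) + 1 + m) ^ (-α⁻¹)) r,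
    ← Real.rpow_mul hb]

lemma neg_inv_mul_lt (h0 : 0 < α) (h1 : α < 1) {r : ℕ} (hr : 1 ≤ r) : -α⁻¹ * r < -1 := by
  have h2 : 1 < α⁻¹ := (one_lt_inv₀ h0).2 h1
  have h3 : (1 : ℝ) ≤ r := by exact_mod_cast hr
  have : α⁻¹ * 1 ≤ α⁻¹ * r := by nlinarith
  nlinarith

lemma summable_gfun_pow (h0 : 0 < α) (h1 : α < 1) (m : ℕ) {r : ℕ} (hr : 1 ≤ r) :
    Summable (fun j => gfun α L m j ^ r) := by
  have := (summable_shift m (neg_inv_mul_lt h0 h1 hr)).mul_left ((L ^ α⁻¹) ^ r)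
  exact this.congr fun j => (gfun_pow_eq m j r).symm

lemma tau_nonneg (hL : 0 < L) (m : ℕ) : 0 ≤ tau α L m :=
  tsum_nonneg fun j => (gfun_pos hL m j).le

lemma tendsto_tau : Tendsto (tau α L) atTop (nhds 0) := by
  have key := tendsto_sum_nat_add (fun v : ℕ => L ^ α⁻¹ * (v : ℝ) ^ (-α⁻¹))
  have := key.comp (tendsto_add_atTop_nat 1)
  refine this.congr fun m => ?_
  simp only [Function.comp]
  refine tsum_congr fun k => ?_
  have hcast : ((k + (m + 1) : ℕ) : ℝ) = (k : ℝ) + 1 + m := by push_cast; ring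
  rw [hcast]
  rfl

lemma tendsto_Tsum {r : ℕ} (hr : 1 ≤ r) :
    Tendsto (fun m => Tsum α L r m) atTop (nhds 0) := by
  have key := tendsto_sum_nat_add (fun v : ℕ => (L ^ α⁻¹ * (v : ℝ) ^ (-α⁻¹)) ^ r)
  have := key.comp (tendsto_add_atTop_nat 1)
  refine this.congr fun m => ?_
  simp only [Function.comp]
  refine tsum_congr fun k => ?_
  have : ((k + (m + 1) : ℕ) : ℝ) = (k : ℝ) + 1 + m := by push_cast; ring
  rw [this]
  rfl

lemma Tsum_pos (h0 : 0 < α) (h1 : α < 1) (hL : 0 < L) (m : ℕ) {r : ℕ} (hr : 1 ≤ r) : 0 < Tsum α L r m :=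
  Summable.tsum_pos (summable_gfun_pow h0 h1 m hr) (fun j => pow_nonneg (gfun_pos hL m j).le r) 0
    (pow_pos (gfun_pos hL m 0) r)

lemma pfun_nonneg (hL : 0 < L) (m : ℕ) (hm : tau α L m ≤ 1) (j : ℕ) : 0 ≤ pfun α L m j := by
  rcases j with _ | k
  · simp only [pfun, if_true, reduceIte]; linarith
  · simp only [pfun, Nat.succ_ne_zero, reduceIte, if_neg (by omega : ¬ k + 1 = 0)]
    exact (gfun_pos hL m _).le

lemma summable_pfun (h0 : 0 < α) (h1 : α < 1) (hL : 0 < L) (m : ℕ) : Summable (pfun α L m) := by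
  have h1 : Summable (fun j : ℕ => pfun α L m (j + 1)) := by
    refine (summable_gfun (L := L) h0 h1 m).congr fun j => ?_
    simp [pfun]
  exact (summable_nat_add_iff 1).1 h1

lemma tsum_pfun (h0 : 0 < α) (h1 : α < 1) (hL : 0 < L) (m : ℕ) : ∑' j, pfun α L m j = 1 := by
  rw [Summable.tsum_eq_zero_add (summable_pfun h0 h1 hL m)]
  have h2 : ∑' j : ℕ, pfun α L m (j + 1) = tau α L m := by
    refine tsum_congr fun j => ?_
    simp [pfun]
  rw [h2]
  simp [pfun]

/-- The adversarial PMF. -/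
def Pdist (h0 : 0 < α) (h1 : α < 1) (hL : 0 < L) (m : ℕ) (hm : tau α L m ≤ 1) : PMF ℕ :=
  ⟨fun j => ENNReal.ofReal (pfun α L m j), by
    have hs : HasSum (fun j => ENNReal.ofReal (pfun α L m j))
        (∑' j, ENNReal.ofReal (pfun α L m j)) := ENNReal.summable.hasSum
    have : ∑' j, ENNReal.ofReal (pfun α L m j) = 1 := by
      rw [← ENNReal.ofReal_tsum_of_nonneg (pfun_nonneg hL m hm)
        (summable_pfun h0 h1 hL m), tsum_pfun h0 h1 hL m, ENNReal.ofReal_one]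
    rwa [this] at hs⟩

lemma pReal_Pdist (h0 : 0 < α) (h1 : α < 1) (hL : 0 < L) (m : ℕ) (hm : tau α L m ≤ 1) (j : ℕ) :
    pReal (Pdist h0 h1 hL m hm) j = pfun α L m j := by
  simp only [pReal, Pdist]
  exact ENNReal.toReal_ofReal (pfun_nonneg hL m hm j)

lemma key_iff (h0 : 0 < α) (hL : 0 < L) {x y : ℝ} (hx : 0 < x) (hy : 0 < y) :
    x < L ^ α⁻¹ * y ^ (-α⁻¹) ↔ y < (x / L ^ α⁻¹) ^ (-α) := by
  have hc : (0 : ℝ) < L ^ α⁻¹ := cpos hL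
  rw [← div_lt_iff₀' hc]
  have hinv : -α⁻¹ = (-α)⁻¹ := by rw [inv_neg]
  rw [hinv]
  exact Real.lt_rpow_inv_iff_of_neg (div_pos hx hc) hy (by linarith)

lemma xc_eq (h0 : 0 < α) (hL : 0 < L) {x : ℝ} (hx : 0 < x) : x ^ α * (x / L ^ α⁻¹) ^ (-α) = L := by
  have hc : (0 : ℝ) < L ^ α⁻¹ := cpos hL
  have h2 : ((L ^ α⁻¹) ^ α) = L := by
    rw [← Real.rpow_mul hL.le, inv_mul_cancel₀ h0.ne', Real.rpow_one]
  rw [Real.div_rpow hx.le hc.le, Real.rpow_neg hx.le, Real.rpow_neg hc.le, h2]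
  have hxa : x ^ α ≠ 0 := (Real.rpow_pos_of_pos hx α).ne'
  field_simp

/-- Identification of the tail counting function for small `x`. -/
lemma tailF_eq (h0 : 0 < α) (h1 : α < 1) (hL : 0 < L) (m : ℕ) (hm : tau α L m ≤ 1/2) {x : ℝ} (hx : 0 < x)
    (hx2 : x < 1/2) (hx3 : x < L ^ α⁻¹ * ((1 : ℝ) + m) ^ (-α⁻¹)) :
    (tailF (Pdist h0 h1 hL m (by linarith)) x : ℝ)
      = (⌈(x / L ^ α⁻¹) ^ (-α) - (m : ℝ)⌉₊ : ℝ) := by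
  set B : ℝ := (x / L ^ α⁻¹) ^ (-α) - (m : ℝ) with hB
  set N : ℕ := ⌈B⌉₊ with hNdef
  have hB1 : 1 < B := by
    have := (key_iff h0 hL (y := (1 : ℝ) + m) hx (by positivity)).1 hx3
    simp only [hB]
    linarith
  have hN1 : 1 ≤ N := by
    rw [hNdef]
    exact Nat.one_le_ceil_iff.2 (by linarith)
  have hset : {j : ℕ | x < pReal (Pdist h0 h1 hL m (by linarith)) j}
      = ↑(insert 0 (Finset.Ioo 0 N)) := by
    ext j
    simp only [Set.mem_setOf_eq, Finset.coe_insert, Set.mem_insert_iff,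
      Finset.mem_coe, Finset.mem_Ioo]
    rw [pReal_Pdist]
    rcases j with _ | k
    · simp only [pfun, reduceIte]
      constructor
      · intro _; tauto
      · intro _; linarith
    · simp only [pfun, if_neg (by omega : ¬ k + 1 = 0)]
      have hkey := key_iff (α := α) (L := L) h0 hL (y := (k : ℝ) + 1 + m) hx
        (by positivity)
      have hg : gfun α L m (k + 1 - 1) = L ^ α⁻¹ * ((k : ℝ) + 1 + m) ^ (-α⁻¹) := by
        simp [gfun]
      rw [hg, hkey]
      constructor
      · intro hlt
        right
        refine ⟨by omega, ?_⟩
        rw [hNdef, Nat.lt_ceil]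
        push_cast
        simp only [hB]
        linarith
      · rintro (hc | ⟨-, hlt⟩)
        · exact absurd hc (by omega)
        · rw [hNdef, Nat.lt_ceil] at hlt
          push_cast at hlt
          simp only [hB] at hlt
          linarith
  rw [tailF, hset, Set.ncard_coe_finset,
    Finset.card_insert_of_notMem (by simp), Nat.card_Ioo]
  have : N - 0 - 1 + 1 = N := by omega
  rw [this]

/-- The regular variation property of the adversarial distribution. -/
lemma tendsto_tailF (h0 : 0 < α) (h1 : α < 1) (hL : 0 < L) (m : ℕ) (hm : tau α L m ≤ 1/2) :
    Tendsto (fun x => x ^ α * (tailF (Pdist h0 h1 hL m (by linarith)) x : ℝ))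
      (nhdsWithin 0 (Set.Ioi 0)) (nhds L) := by
  have hc : (0 : ℝ) < L ^ α⁻¹ := cpos hL
  set x₀ : ℝ := min (1/2) (L ^ α⁻¹ * ((1 : ℝ) + m) ^ (-α⁻¹)) with hx₀
  have hx₀pos : 0 < x₀ := lt_min (by norm_num) (by positivity)
  have hmem : Set.Ioo (0 : ℝ) x₀ ∈ nhdsWithin (0 : ℝ) (Set.Ioi 0) :=
    Ioo_mem_nhdsGT_of_mem ⟨le_refl 0, hx₀pos⟩
  have hpow : Tendsto (fun x : ℝ => x ^ α) (nhdsWithin 0 (Set.Ioi 0)) (nhds 0) := by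
    have hcont := (Real.continuousAt_rpow_const 0 α (Or.inr h0.le)).tendsto
    rw [Real.zero_rpow h0.ne'] at hcont
    exact hcont.mono_left nhdsWithin_le_nhds
  have hlow : Tendsto (fun x : ℝ => L - x ^ α * m) (nhdsWithin 0 (Set.Ioi 0))
      (nhds L) := by
    have := tendsto_const_nhds (α := ℝ) (x := L)
      (f := nhdsWithin (0:ℝ) (Set.Ioi 0)) |>.sub (hpow.mul_const (m : ℝ))
    simpa using this
  have hup : Tendsto (fun x : ℝ => L + x ^ α) (nhdsWithin 0 (Set.Ioi 0))
      (nhds L) := by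
    have := tendsto_const_nhds (α := ℝ) (x := L)
      (f := nhdsWithin (0:ℝ) (Set.Ioi 0)) |>.add hpow
    simpa using this
  refine tendsto_of_tendsto_of_tendsto_of_le_of_le' hlow hup ?_ ?_
  · filter_upwards [hmem] with x hx
    obtain ⟨hx0, hxlt⟩ := hx
    have hx2 : x < 1/2 := lt_of_lt_of_le hxlt (min_le_left _ _)
    have hx3 : x < L ^ α⁻¹ * ((1 : ℝ) + m) ^ (-α⁻¹) :=
      lt_of_lt_of_le hxlt (min_le_right _ _)
    rw [tailF_eq h0 h1 hL m hm hx0 hx2 hx3]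
    set B : ℝ := (x / L ^ α⁻¹) ^ (-α) - (m : ℝ) with hB
    have hceil : B ≤ (⌈B⌉₊ : ℝ) := Nat.le_ceil B
    have hxa : 0 < x ^ α := Real.rpow_pos_of_pos hx0 α
    have he : x ^ α * B = L - x ^ α * m := by
      rw [hB, mul_sub, xc_eq h0 hL hx0]
    nlinarith [mul_le_mul_of_nonneg_left hceil hxa.le]
  · filter_upwards [hmem] with x hx
    obtain ⟨hx0, hxlt⟩ := hx
    have hx2 : x < 1/2 := lt_of_lt_of_le hxlt (min_le_left _ _)
    have hx3 : x < L ^ α⁻¹ * ((1 : ℝ) + m) ^ (-α⁻¹) :=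
      lt_of_lt_of_le hxlt (min_le_right _ _)
    rw [tailF_eq h0 h1 hL m hm hx0 hx2 hx3]
    set B : ℝ := (x / L ^ α⁻¹) ^ (-α) - (m : ℝ) with hB
    have hB1 : 1 < B := by
      have := (key_iff h0 hL (y := (1 : ℝ) + m) hx0 (by positivity)).1 hx3
      simp only [hB]; linarith
    have hceil : (⌈B⌉₊ : ℝ) < B + 1 := Nat.ceil_lt_add_one (by linarith)
    have hxa : 0 < x ^ α := Real.rpow_pos_of_pos hx0 α
    have he : x ^ α * B = L - x ^ α * m := by
      rw [hB, mul_sub, xc_eq h0 hL hx0]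
    nlinarith [mul_le_mul_of_nonneg_left hceil.le hxa.le]

end lemmas

/-- The multiplicative loss is at least `ε` when the truth is small and positive. -/
lemma mloss_ge {h : ℝ → ℝ} {v T ε : ℝ} (hT : 0 < T) (hε : ε ≤ 1)
    (hcase : v ≤ 0 ∨ T ≤ v / 2) : mloss h v T ≥ ε := by
  rw [mloss, if_pos hT]
  rcases hcase with hv | hvT
  · have : v / T ≤ 0 := div_nonpos_of_nonpos_of_nonneg hv hT.le
    rw [abs_sub_comm]
    calc ε ≤ 1 := hε
      _ ≤ 1 - v / T := by linarith
      _ ≤ |1 - v / T| := le_abs_self _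
  · have hv : 0 < v := by nlinarith
    have h2 : (2 : ℝ) ≤ v / T := by
      rw [le_div_iff₀ hT]; linarith
    calc ε ≤ 1 := hε
      _ ≤ v / T - 1 := by linarith
      _ ≤ |v / T - 1| := le_abs_self _

end MMImp

open MMImp in
/-- Minimax estimation of `θ_r(P;X_n)` is not feasible over the class `Σ(α,L)` of
distributions with regularly varying tails `lim_{x→0} x^α F̄_P(x) = L`: the worst-case
probability of a relative error at least `ε` equals one. -/
theorem missingMass_minimax_infeasible_regularly_varying
    (α : ℝ) (hα : α ∈ Set.Ioo (0 : ℝ) 1) (L : ℝ) (hL : 0 < L)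
    (r n : ℕ) (hr : 1 ≤ r) (hn : 2 ≤ n)
    (ε : ℝ) (hε : ε ∈ Set.Ioo (0 : ℝ) 1)
    (est : (Fin n → ℕ) → ℝ) (hest : Measurable est)
    (h : ℝ → ℝ) (hh : Measurable h) :
    ⨆ (P : PMF ℕ)
      (_ : Tendsto (fun x => x ^ α * (tailF P x : ℝ)) (nhdsWithin 0 (Set.Ioi 0)) (nhds L)),
      sampleMeasure P n
        {ω | mloss h (est ω) (missingMass (pReal P) r ω) ≥ ε} = 1 := by
  obtain ⟨h0, h1⟩ := hα
  -- the value of the estimator at the all-zero sample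
  set v : ℝ := est (fun _ => 0) with hv
  refine le_antisymm ?_ ?_
  · refine iSup_le fun P => iSup_le fun _ => ?_
    haveI : IsProbabilityMeasure (P.toMeasure) := PMF.toMeasure.isProbabilityMeasure P
    haveI : IsProbabilityMeasure (sampleMeasure P n) := by
      unfold sampleMeasure; infer_instance
    exact prob_le_one
  · -- lower bound: a sequence of adversarial distributions
    have hgood : ∀ᶠ m : ℕ in atTop,
        tau α L m ≤ 1/2 ∧ (v ≤ 0 ∨ Tsum α L r m ≤ v / 2) := by
      have e1 : ∀ᶠ m : ℕ in atTop, tau α L m ≤ 1/2 :=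
        (tendsto_tau (α := α) (L := L)).eventually
          (eventually_le_nhds (by norm_num))
      have e2 : ∀ᶠ m : ℕ in atTop, (v ≤ 0 ∨ Tsum α L r m ≤ v / 2) := by
        rcases le_or_gt v 0 with hv0 | hv0
        · exact Eventually.of_forall fun _ => Or.inl hv0
        · have := (tendsto_Tsum (α := α) (L := L) (r := r) hr).eventually
            (eventually_le_nhds (by positivity : (0:ℝ) < v / 2))
          filter_upwards [this] with m hm
          exact Or.inr (by simpa using hm)
      filter_upwards [e1, e2] with m hm1 hm2 using ⟨hm1, hm2⟩
    -- the lower bound along the sequence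
    have hbound : ∀ᶠ m : ℕ in atTop,
        (ENNReal.ofReal (1 - tau α L m)) ^ n ≤
          ⨆ (P : PMF ℕ)
            (_ : Tendsto (fun x => x ^ α * (tailF P x : ℝ))
              (nhdsWithin 0 (Set.Ioi 0)) (nhds L)),
            sampleMeasure P n
              {ω | mloss h (est ω) (missingMass (pReal P) r ω) ≥ ε} := by
      filter_upwards [hgood] with m hm
      obtain ⟨hm1, hm2⟩ := hm
      have hm1' : tau α L m ≤ 1 := by linarith
      set P : PMF ℕ := Pdist h0 h1 hL m hm1' with hP
      -- the tail condition
      have htail : Tendsto (fun x => x ^ α * (tailF P x : ℝ))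
          (nhdsWithin 0 (Set.Ioi 0)) (nhds L) := tendsto_tailF h0 h1 hL m hm1
      refine le_iSup₂_of_le P htail ?_
      -- the all-zero event is contained in the bad event
      have hsub : (Set.univ.pi fun _ : Fin n => ({0} : Set ℕ)) ⊆
          {ω | mloss h (est ω) (missingMass (pReal P) r ω) ≥ ε} := by
        intro ω hω
        have hω0 : ω = fun _ => 0 := by
          funext i
          exact hω i (Set.mem_univ i)
        subst hω0
        simp only [Set.mem_setOf_eq]
        -- compute the missing mass at the all-zero sample
        have hfreq0 : freq (fun _ : Fin n => 0) 0 = n := by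
          simp [freq, Finset.filter_true_of_mem]
        have hfreqpos : ∀ j : ℕ, j ≠ 0 → freq (fun _ : Fin n => 0) j = 0 := by
          intro j hj
          simp only [freq, Finset.card_eq_zero]
          refine Finset.filter_false_of_mem fun i _ => ?_
          omega
        have hmm : missingMass (pReal P) r (fun _ : Fin n => 0) = Tsum α L r m := by
          rw [missingMass]
          have hsum1 : Summable (fun j : ℕ =>
              pReal P j ^ r * (if freq (fun _ : Fin n => 0) j = 0 then (1:ℝ) else 0)) := by
            have hs : Summable (fun j : ℕ =>
                (if j = 0 then (0:ℝ) else gfun α L m (j-1) ^ r)) := by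
              have hss : Summable (fun j : ℕ =>
                  (if (j+1) = 0 then (0:ℝ) else gfun α L m ((j+1)-1) ^ r)) := by
                refine (summable_gfun_pow (L := L) h0 h1 m hr).congr fun j => ?_
                simp
              exact (summable_nat_add_iff 1).1 hss
            refine hs.congr fun j => ?_
            rcases j with _ | k
            · have hn0 : ¬ (n = 0) := by omega
              simp [hfreq0, hn0]
            · rw [hfreqpos (k+1) (by omega)]
              simp [pReal_Pdist, pfun, hP]
          rw [Summable.tsum_eq_zero_add hsum1]
          have hz : pReal P 0 ^ r *
              (if freq (fun _ : Fin n => 0) 0 = 0 then (1:ℝ) else 0) = 0 := by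
            rw [hfreq0, if_neg (by omega)]
            ring
          rw [hz, zero_add, Tsum]
          refine tsum_congr fun j => ?_
          rw [hfreqpos (j+1) (by omega), if_pos rfl, mul_one, hP,
            pReal_Pdist h0 h1 hL m hm1' (j+1)]
          simp [pfun]
        rw [hmm]
        exact mloss_ge (Tsum_pos h0 h1 hL m hr) hε.2.le hm2
      calc (ENNReal.ofReal (1 - tau α L m)) ^ n
          = sampleMeasure P n (Set.univ.pi fun _ : Fin n => ({0} : Set ℕ)) := by
            rw [sampleMeasure, Measure.pi_pi]
            have hP0 : P.toMeasure {0} = ENNReal.ofReal (1 - tau α L m) := by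
              rw [PMF.toMeasure_apply_singleton _ _ (measurableSet_singleton 0)]
              rw [hP]
              rw [show ((Pdist h0 h1 hL m hm1') 0) = ENNReal.ofReal (pfun α L m 0) from rfl]
              simp [pfun]
            rw [Finset.prod_congr rfl fun i _ => hP0]
            simp
        _ ≤ sampleMeasure P n
              {ω | mloss h (est ω) (missingMass (pReal P) r ω) ≥ ε} :=
            measure_mono hsub
    -- conclude by taking the limit m → ∞
    have hlim : Tendsto (fun m => (ENNReal.ofReal (1 - tau α L m)) ^ n)
        atTop (nhds 1) := by
      have h1' : Tendsto (fun m => (1 : ℝ) - tau α L m) atTop (nhds 1) := by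
        have := (tendsto_tau (α := α) (L := L)).const_sub 1
        simpa using this
      have h2' : Tendsto (fun m => ENNReal.ofReal (1 - tau α L m)) atTop
          (nhds 1) := by
        have := (ENNReal.continuous_ofReal.tendsto 1).comp h1'
        simpa [Function.comp_def] using this
      have h3' := (ENNReal.continuous_pow n).tendsto 1 |>.comp h2'
      simpa [Function.comp_def] using h3'
    exact le_of_tendsto hlim hbound

end
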